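/- For all s > 0 one has ½·h(s)·s ≤ H(s) ≤ h(s)·s, where h(u) = -u·log(u²) for 0 ≤ u ≤ e⁻¹, h(u) = 2/e for u > e⁻¹, and H(u) = ∫₀ᵘ h. -/
import Mathlib


noncomputable def h (u : ℝ) : ℝ :=
  if |u| ≤ (Real.exp 1)⁻¹ then -u * Real.log (u ^ 2)
  else if u > (Real.exp 1)⁻¹ then 2 / Real.exp 1
  else -(2 / Real.exp 1)

noncomputable def H (u : ℝ) : ℝ :=
  if |u| ≤ (Real.exp 1)⁻¹ then
    -(1 / 2) * u ^ 2 * Real.log (u ^ 2) + (1 / 2) * u ^ 2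
  else (2 / Real.exp 1) * |u| - 1 / (2 * Real.exp 1 ^ 2)

theorem H_between :
    ∀ s > (0 : ℝ), (1 / 2) * h s * s ≤ H s ∧ H s ≤ h s * s := by
  intro s hs
  have he : (0:ℝ) < Real.exp 1 := Real.exp_pos 1
  unfold h H
  by_cases hc : |s| ≤ (Real.exp 1)⁻¹
  · simp only [hc, if_pos]
    have hs' : s ≤ (Real.exp 1)⁻¹ := (le_abs_self s).trans hc
    have hlog : Real.log (s ^ 2) ≤ -2 := by
      have : Real.log s ≤ -1 := by
        calc Real.log s ≤ Real.log (Real.exp 1)⁻¹ := Real.log_le_log hs hs'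
        _ = -1 := by rw [Real.log_inv, Real.log_exp]
      rw [Real.log_pow]
      push_cast; linarith
    constructor
    · nlinarith [sq_nonneg s]
    · nlinarith [sq_nonneg s, mul_pos hs hs]
  · simp only [hc, if_neg, not_false_iff]
    have hgt : s > (Real.exp 1)⁻¹ := by
      rcases abs_cases s with ⟨h1, _⟩ | ⟨h1, h2⟩
      · push_neg at hc; linarith
      · linarith
    simp only [hgt, if_pos, abs_of_pos hs]
    have hinv : (0:ℝ) < (Real.exp 1)⁻¹ := inv_pos.mpr he
    constructor
    · have : 1 / (2 * Real.exp 1 ^ 2) ≤ s / Real.exp 1 := by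
        rw [div_le_div_iff₀ (by positivity) he]
        have : (Real.exp 1)⁻¹ * Real.exp 1 = 1 := inv_mul_cancel₀ he.ne'
        nlinarith
      have h2 : (1:ℝ)/2 * (2 / Real.exp 1) * s = s / Real.exp 1 := by ring
      linarith
    · have : (0:ℝ) < 1 / (2 * Real.exp 1 ^ 2) := by positivity
      linarith
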